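/- For an s-stage RK scheme (A, b) with c = A e and any q ≥ 1, the following are equivalent: (i) b^T A^j τ^(k) = 0 for all 0 ≤ j ≤ s−1 and 1 ≤ k ≤ q (weak stage order at least q); (ii) for every ζ ∈ ℝ such that I − ζ A is invertible, b^T (I − ζ A)^{-1} τ^(k) = 0 for all 1 ≤ k ≤ q. In other words, weak stage order q is exactly the condition needed to annihilate the resolvent terms b^T (I − ζ A)^{-1} τ^(k) that cause order reduction for stiff linear problems. -/

import Mathlib

open Matrix Filter Topology

/-- If `bᵀ Aʲ t = 0` for all `j < s`, then for all `n` (via Cayley–Hamilton). -/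
lemma wso_all_powers {s : ℕ} (A : Matrix (Fin s) (Fin s) ℝ) (b t : Fin s → ℝ)
    (h : ∀ j, j < s → b ⬝ᵥ (A ^ j).mulVec t = 0) :
    ∀ n : ℕ, b ⬝ᵥ (A ^ n).mulVec t = 0 := by
  rcases Nat.eq_zero_or_pos s with hs | hs
  · subst hs
    intro n
    simp [dotProduct]
  set p := A.charpoly with hp
  have hdeg : p.natDegree = s := by
    rw [hp, A.charpoly_natDegree_eq_dim, Fintype.card_fin]
  have hAs : A ^ s = -∑ i ∈ Finset.range s, p.coeff i • A ^ i := by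
    have h0 : (0 : Matrix (Fin s) (Fin s) ℝ) =
        ∑ i ∈ Finset.range (p.natDegree + 1), p.coeff i • A ^ i := by
      rw [← Polynomial.aeval_eq_sum_range]
      exact (A.aeval_self_charpoly).symm
    rw [Finset.sum_range_succ, hdeg] at h0
    have hc : p.coeff s = 1 := by
      have := (A.charpoly_monic).coeff_natDegree
      rwa [hdeg] at this
    rw [hc, one_smul] at h0
    exact eq_neg_of_add_eq_zero_right h0.symm
  intro n
  induction n using Nat.strong_induction_on with
  | _ n ih =>
    by_cases hn : n < s
    · exact h n hn
    push_neg at hn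
    have hsplit : A ^ n = A ^ (n - s) * A ^ s := by
      rw [← pow_add]
      congr 1
      omega
    have hrw : b ⬝ᵥ (A ^ n).mulVec t
        = -∑ i ∈ Finset.range s, p.coeff i * (b ⬝ᵥ (A ^ (n - s + i)).mulVec t) := by
      rw [hsplit, hAs, Matrix.mul_neg, Matrix.mul_sum, Matrix.neg_mulVec, dotProduct_neg,
        neg_inj]
      have hsum : ∀ (S : Finset ℕ) (M : ℕ → Matrix (Fin s) (Fin s) ℝ),
          b ⬝ᵥ (∑ i ∈ S, M i).mulVec t = ∑ i ∈ S, b ⬝ᵥ (M i).mulVec t := by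
        intro S M
        induction S using Finset.induction_on with
        | empty => simp
        | insert _ _ hni ihS =>
          rw [Finset.sum_insert hni, Finset.sum_insert hni, Matrix.add_mulVec,
            dotProduct_add, ihS]
      rw [hsum]
      refine Finset.sum_congr rfl fun i _ => ?_
      rw [Matrix.mul_smul, ← pow_add, Matrix.smul_mulVec, dotProduct_smul, smul_eq_mul]
    rw [hrw, neg_eq_zero]
    refine Finset.sum_eq_zero fun i hi => ?_
    rw [ih (n - s + i) (by simp only [Finset.mem_range] at hi; omega), mul_zero]

/-- Reverse direction: resolvent vanishing implies all `bᵀ Aⁿ t = 0`. -/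
lemma wso_of_resolvent {s : ℕ} (A : Matrix (Fin s) (Fin s) ℝ) (b t : Fin s → ℝ)
    (h : ∀ ζ : ℝ, (1 - ζ • A).det ≠ 0 → b ⬝ᵥ (1 - ζ • A)⁻¹.mulVec t = 0) :
    ∀ n : ℕ, b ⬝ᵥ (A ^ n).mulVec t = 0 := by
  set g : ℕ → ℝ → ℝ :=
    fun m ζ => b ⬝ᵥ (A ^ m).mulVec ((1 - ζ • A)⁻¹.mulVec t) with hgdef
  have hM : Continuous fun ζ : ℝ => (1 : Matrix (Fin s) (Fin s) ℝ) - ζ • A := by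
    exact continuous_const.sub (continuous_id.smul continuous_const)
  have hdetc : Continuous fun ζ : ℝ => (1 - ζ • A).det := hM.matrix_det
  have hdet0 : ((1 : Matrix (Fin s) (Fin s) ℝ) - (0 : ℝ) • A).det = 1 := by simp
  have hgeq : ∀ m, g m = fun ζ : ℝ =>
      ((1 - ζ • A).det)⁻¹ *
        (b ⬝ᵥ (A ^ m).mulVec ((adjugate (1 - ζ • A)).mulVec t)) := by
    intro m
    funext ζ
    rw [hgdef]
    simp only
    rw [Matrix.inv_def, Ring.inverse_eq_inv, Matrix.smul_mulVec, Matrix.mulVec_smul,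
      dotProduct_smul, smul_eq_mul]
  have hcont : ∀ m, ContinuousAt (g m) 0 := by
    intro m
    rw [hgeq m]
    have h1 : ContinuousAt (fun ζ : ℝ => ((1 - ζ • A).det)⁻¹) 0 := by
      apply ContinuousAt.inv₀ hdetc.continuousAt
      rw [hdet0]; exact one_ne_zero
    exact h1.mul (continuous_const.dotProduct
      (continuous_const.matrix_mulVec
        (hM.matrix_adjugate.matrix_mulVec continuous_const))).continuousAt
  have hnbhd : {ζ : ℝ | (1 - ζ • A).det ≠ 0} ∈ 𝓝 (0 : ℝ) := by
    have hop : IsOpen {ζ : ℝ | (1 - ζ • A).det ≠ 0} :=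
      isOpen_compl_singleton.preimage hdetc
    exact hop.mem_nhds (by simp [hdet0])
  have hg0 : ∀ m, g m 0 = b ⬝ᵥ (A ^ m).mulVec t := by
    intro m
    rw [hgdef]
    simp
  have key : ∀ m, (∀ ζ : ℝ, ζ ≠ 0 → (1 - ζ • A).det ≠ 0 → g m ζ = 0) → g m 0 = 0 := by
    intro m hm
    have h1 : Tendsto (g m) (𝓝[≠] (0 : ℝ)) (𝓝 (g m 0)) :=
      ((hcont m).tendsto).mono_left nhdsWithin_le_nhds
    have h2 : Tendsto (g m) (𝓝[≠] (0 : ℝ)) (𝓝 0) := by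
      apply Tendsto.congr' _ tendsto_const_nhds
      filter_upwards [self_mem_nhdsWithin, mem_nhdsWithin_of_mem_nhds hnbhd] with ζ h0 hd
      exact (hm ζ h0 hd).symm
    exact tendsto_nhds_unique h1 h2
  have hstep : ∀ (m : ℕ) (ζ : ℝ), (1 - ζ • A).det ≠ 0 →
      g m ζ = b ⬝ᵥ (A ^ m).mulVec t + ζ * g (m + 1) ζ := by
    intro m ζ hd
    have hu : IsUnit (1 - ζ • A).det := isUnit_iff_ne_zero.mpr hd
    set v : Fin s → ℝ := (1 - ζ • A)⁻¹.mulVec t with hvdef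
    have h1 : (1 - ζ • A).mulVec v = t := by
      rw [hvdef, Matrix.mulVec_mulVec, Matrix.mul_nonsing_inv _ hu, Matrix.one_mulVec]
    rw [Matrix.sub_mulVec, Matrix.one_mulVec, Matrix.smul_mulVec] at h1
    have hv : v = t + ζ • A.mulVec v := sub_eq_iff_eq_add.mp h1
    rw [hgdef]
    simp only
    rw [← hvdef]
    conv_lhs => rw [hv]
    rw [Matrix.mulVec_add, dotProduct_add, Matrix.mulVec_smul, dotProduct_smul, smul_eq_mul,
      Matrix.mulVec_mulVec, ← pow_succ]
  have zer : ∀ m, ∀ ζ : ℝ, ζ ≠ 0 → (1 - ζ • A).det ≠ 0 → g m ζ = 0 := by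
    intro m
    induction m with
    | zero =>
      intro ζ _ hd
      rw [hgdef]
      simpa using h ζ hd
    | succ m ih =>
      intro ζ hz hd
      have hx : b ⬝ᵥ (A ^ m).mulVec t = 0 := by
        rw [← hg0 m]; exact key m ih
      have := hstep m ζ hd
      rw [ih ζ hz hd, hx, zero_add] at this
      exact (mul_eq_zero.mp this.symm).resolve_left hz
  intro n
  rw [← hg0 n]
  exact key n (zer n)

/-- Generic single-vector equivalence. -/
lemma wso_iff_resolvent {s : ℕ} (A : Matrix (Fin s) (Fin s) ℝ) (b t : Fin s → ℝ) :
    (∀ j, j < s → b ⬝ᵥ (A ^ j).mulVec t = 0) ↔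
      ∀ ζ : ℝ, (1 - ζ • A).det ≠ 0 → b ⬝ᵥ (1 - ζ • A)⁻¹.mulVec t = 0 := by
  constructor
  · intro h ζ hd
    have hu : IsUnit (1 - ζ • A).det := isUnit_iff_ne_zero.mpr hd
    have hall : ∀ n : ℕ, b ⬝ᵥ (A ^ n).mulVec t = 0 := wso_all_powers A b t h
    set W : Submodule ℝ (Fin s → ℝ) :=
      { carrier := {w | ∀ n : ℕ, b ⬝ᵥ (A ^ n).mulVec w = 0}
        add_mem' := fun hx hy n => by
          rw [Matrix.mulVec_add, dotProduct_add, hx n, hy n, add_zero]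
        zero_mem' := fun n => by rw [Matrix.mulVec_zero, dotProduct_zero]
        smul_mem' := fun r x hx n => by
          rw [Matrix.mulVec_smul, dotProduct_smul, hx n, smul_zero] } with hW
    set L : (Fin s → ℝ) →ₗ[ℝ] (Fin s → ℝ) := (1 - ζ • A).mulVecLin with hL
    have hmaps : ∀ x ∈ W, L x ∈ W := by
      intro x hx n
      have hx' : ∀ n : ℕ, b ⬝ᵥ (A ^ n).mulVec x = 0 := hx
      show b ⬝ᵥ (A ^ n).mulVec ((1 - ζ • A).mulVec x) = 0
      rw [Matrix.mulVec_mulVec, Matrix.mul_sub, Matrix.mul_one, Matrix.mul_smul, ← pow_succ,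
        Matrix.sub_mulVec, dotProduct_sub, Matrix.smul_mulVec, dotProduct_smul,
        hx' n, hx' (n + 1), smul_zero, sub_zero]
    have hinj : Function.Injective L := by
      intro x y hxy
      have h2 := congrArg (fun w => (1 - ζ • A)⁻¹.mulVec w) hxy
      simp only [hL, Matrix.mulVecLin_apply] at h2
      rwa [Matrix.mulVec_mulVec, Matrix.mulVec_mulVec, Matrix.nonsing_inv_mul _ hu,
        Matrix.one_mulVec, Matrix.one_mulVec] at h2
    have hinj' : Function.Injective (L.restrict hmaps) := by
      intro x y hxy
      exact Subtype.ext (hinj (congrArg Subtype.val hxy))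
    have hsurj : Function.Surjective (L.restrict hmaps) :=
      LinearMap.injective_iff_surjective.mp hinj'
    have ht : t ∈ W := fun n => hall n
    obtain ⟨⟨w, hw⟩, hLw⟩ := hsurj ⟨t, ht⟩
    have hLw' : (1 - ζ • A).mulVec w = t := congrArg Subtype.val hLw
    have hveq : (1 - ζ • A)⁻¹.mulVec t = w := by
      rw [← hLw', Matrix.mulVec_mulVec, Matrix.nonsing_inv_mul _ hu, Matrix.one_mulVec]
    rw [hveq]
    simpa using hw 0
  · intro h j _
    exact wso_of_resolvent A b t h j

/-- Weak stage order at least `q` (i.e. `bᵀ Aʲ τ⁽ᵏ⁾ = 0` for `0 ≤ j ≤ s−1`, `1 ≤ k ≤ q`)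
holds iff for every `ζ ∈ ℝ` with `I − ζA` invertible one has
`bᵀ (I − ζA)⁻¹ τ⁽ᵏ⁾ = 0` for all `1 ≤ k ≤ q`. -/
theorem stmt4 {s : ℕ} (A : Matrix (Fin s) (Fin s) ℝ) (b : Fin s → ℝ)
    (c : Fin s → ℝ) (hc : c = A.mulVec fun _ => 1)
    (q : ℕ) (hq : 1 ≤ q)
    (τ : ℕ → Fin s → ℝ)
    (hτ : ∀ k, τ k = A.mulVec (fun i => c i ^ (k - 1)) - (k : ℝ)⁻¹ • fun i => c i ^ k) :
    (∀ j, j < s → ∀ k, 1 ≤ k → k ≤ q → b ⬝ᵥ (A ^ j).mulVec (τ k) = 0) ↔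
      ∀ ζ : ℝ, (1 - ζ • A).det ≠ 0 →
        ∀ k, 1 ≤ k → k ≤ q → b ⬝ᵥ (1 - ζ • A)⁻¹.mulVec (τ k) = 0 := by
  constructor
  · intro h ζ hd k hk1 hk2
    exact (wso_iff_resolvent A b (τ k)).mp (fun j hj => h j hj k hk1 hk2) ζ hd
  · intro h j hj k hk1 hk2
    exact (wso_iff_resolvent A b (τ k)).mpr (fun ζ hd => h ζ hd k hk1 hk2) j hj
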